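/- Let R be a commutative ring in which 2 is invertible, let E = E_{1,3} ∈ Mat₃(R), let h(R) be the centralizer of E in gl₃(R) (upper-triangular matrices [[a,x,z],[0,b,y],[0,0,a]]), let h(R)ᵀ be the set of transposes of elements of h(R), and let h(R)^⊥ = { B ∈ gl₃(R) : tr(AB) = 0 for all A ∈ h(R) }. Then gl₃(R) = h(R)ᵀ ⊕ h(R)^⊥ as R-modules, and h(R)^⊥ = [E, gl₃(R)]. -/

import Mathlib

open Matrix

theorem gl3_decomposition_hT_hperp (R : Type*) [CommRing R] (h2 : IsUnit (2 : R))
    (E : Matrix (Fin 3) (Fin 3) R) (hE : E = Matrix.single 0 2 1)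
    (h hT hperp : Set (Matrix (Fin 3) (Fin 3) R))
    (hh : h = {X | ∃ a b x y z : R, X = !![a, x, z; 0, b, y; 0, 0, a]})
    (hhT : hT = {X | ∃ Y ∈ h, X = Y.transpose})
    (hhperp : hperp = {B | ∀ A ∈ h, (A * B).trace = 0}) :
    (∀ X : Matrix (Fin 3) (Fin 3) R,
      ∃! p : Matrix (Fin 3) (Fin 3) R × Matrix (Fin 3) (Fin 3) R,
        p.1 ∈ hT ∧ p.2 ∈ hperp ∧ X = p.1 + p.2) ∧
    hperp = {X | ∃ Y, X = E * Y - Y * E} := by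
  obtain ⟨c, hc⟩ := h2.exists_right_inv
  have hE' : E = !![0,0,1;0,0,0;0,0,0] := by
    subst hE; ext i j; fin_cases i <;> fin_cases j <;>
      simp [Matrix.single, Matrix.vecHead, Matrix.vecTail]
  subst hh hhT hhperp hE'
  constructor
  · intro X
    refine ⟨(!![(X 0 0 + X 2 2)*c, 0, 0; X 1 0, X 1 1, 0; X 2 0, X 2 1, (X 0 0 + X 2 2)*c],
      !![X 0 0 - (X 0 0 + X 2 2)*c, X 0 1, X 0 2; 0, 0, X 1 2; 0, 0, X 2 2 - (X 0 0 + X 2 2)*c]),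
      ⟨⟨!![(X 0 0 + X 2 2)*c, X 1 0, X 2 0; 0, X 1 1, X 2 1; 0, 0, (X 0 0 + X 2 2)*c],
        ⟨(X 0 0 + X 2 2)*c, X 1 1, X 1 0, X 2 1, X 2 0, rfl⟩,
        by ext i j; fin_cases i <;> fin_cases j <;>
          simp [Matrix.vecHead, Matrix.vecTail]⟩,
       ?_, ?_⟩, ?_⟩
    · rintro A ⟨a,b,x,y,z,rfl⟩
      simp only [Matrix.trace_fin_three, Matrix.mul_apply, Fin.sum_univ_three]
      norm_num [Matrix.vecHead, Matrix.vecTail, Matrix.cons_val_two]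
      linear_combination (-(a*(X 0 0 + X 2 2))) * hc
    · ext i j; fin_cases i <;> fin_cases j <;>
        simp only [Matrix.add_apply] <;> norm_num [Matrix.vecHead, Matrix.vecTail] <;>
        first | rfl | ring
    · rintro ⟨P,Q⟩ ⟨⟨Y, ⟨a,b,x,y,z,rfl⟩, rfl⟩, hQ, hXeq⟩
      have e : ∀ i j, X i j = (!![a, x, z; 0, b, y; 0, 0, a]ᵀ + Q) i j :=
        fun i j => congrFun (congrFun hXeq i) j
      have h1 := hQ !![1,0,0;0,0,0;0,0,1] ⟨1,0,0,0,0, by norm_num⟩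
      have h2' := hQ !![0,1,0;0,0,0;0,0,0] ⟨0,0,1,0,0, by norm_num⟩
      have h3 := hQ !![0,0,1;0,0,0;0,0,0] ⟨0,0,0,0,1, by norm_num⟩
      have h4 := hQ !![0,0,0;0,1,0;0,0,0] ⟨0,1,0,0,0, by norm_num⟩
      have h5 := hQ !![0,0,0;0,0,1;0,0,0] ⟨0,0,0,1,0, by norm_num⟩
      simp only [Matrix.trace_fin_three, Matrix.mul_apply, Fin.sum_univ_three] at h1 h2' h3 h4 h5
      norm_num [Matrix.vecHead, Matrix.vecTail, Matrix.cons_val_two] at h1 h2' h3 h4 h5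
      have e00 := e 0 0; have e01 := e 0 1; have e02 := e 0 2
      have e10 := e 1 0; have e11 := e 1 1; have e12 := e 1 2
      have e20 := e 2 0; have e21 := e 2 1; have e22 := e 2 2
      simp only [Matrix.add_apply, Matrix.transpose_apply] at e00 e01 e02 e10 e11 e12 e20 e21 e22
      norm_num [Matrix.vecHead, Matrix.vecTail, Matrix.cons_val_two] at e00 e01 e02 e10 e11 e12 e20 e21 e22
      refine Prod.ext ?_ ?_ <;> ext i j <;> fin_cases i <;> fin_cases j <;>
        simp [Matrix.vecHead, Matrix.vecTail]
      · linear_combination -c*e00 - c*e22 - c*h1 - a*hc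
      · linear_combination -e10 - h2'
      · linear_combination -e11 - h4
      · linear_combination -e20 - h3
      · linear_combination -e21 - h5
      · linear_combination -c*e00 - c*e22 - c*h1 - a*hc
      · linear_combination -e00 + c*e00 + c*e22 + c*h1 + a*hc
      · linear_combination -e01
      · linear_combination -e02
      · exact h2'
      · exact h4
      · linear_combination -e12
      · exact h3
      · exact h5
      · linear_combination -e22 + c*e00 + c*e22 + c*h1 + a*hc
  · ext B
    simp only [Set.mem_setOf_eq]
    constructor
    · intro hB
      have h1 := hB !![1,0,0;0,0,0;0,0,1] ⟨1,0,0,0,0, by norm_num⟩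
      have h2' := hB !![0,1,0;0,0,0;0,0,0] ⟨0,0,1,0,0, by norm_num⟩
      have h3 := hB !![0,0,1;0,0,0;0,0,0] ⟨0,0,0,0,1, by norm_num⟩
      have h4 := hB !![0,0,0;0,1,0;0,0,0] ⟨0,1,0,0,0, by norm_num⟩
      have h5 := hB !![0,0,0;0,0,1;0,0,0] ⟨0,0,0,1,0, by norm_num⟩
      simp only [Matrix.trace_fin_three, Matrix.mul_apply, Fin.sum_univ_three] at h1 h2' h3 h4 h5
      norm_num [Matrix.vecHead, Matrix.vecTail, Matrix.cons_val_two] at h1 h2' h3 h4 h5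
      refine ⟨!![0,0,0; -(B 1 2),0,0; B 0 0, B 0 1, B 0 2], ?_⟩
      ext i j; fin_cases i <;> fin_cases j <;>
        simp only [Matrix.mul_apply, Matrix.sub_apply, Fin.sum_univ_three] <;>
        norm_num [Matrix.vecHead, Matrix.vecTail, Matrix.cons_val_two] <;>
        first
          | rfl | exact h2' | exact h3 | exact h4 | exact h5
          | exact (show B 2 2 = -B 0 0 by linear_combination h1)
          | ring
    · rintro ⟨Y, rfl⟩ A ⟨a,b,x,y,z,rfl⟩
      simp only [Matrix.trace_fin_three, Matrix.mul_apply, Matrix.sub_apply, Fin.sum_univ_three]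
      norm_num [Matrix.vecHead, Matrix.vecTail, Matrix.cons_val_two]
      try ring
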